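/- If λ is an eigenvalue of the adjacency matrix A(G_j) of an r_j-regular graph G_j other than r_j, with eigenvector orthogonal to the all-ones vector, then, in the H-join G of regular graphs, extending this eigenvector by zeros on all other blocks gives an eigenvector of A_α(G) with eigenvalue α s_j + α r_j + (1-α) λ, where s_j = Σ_{jl ∈ E(H)} n_l. -/

import Mathlib

open Matrix Polynomial Finset

noncomputable def Aalpha {V : Type*} [Fintype V] (G : SimpleGraph V) (α : ℝ) :
    Matrix V V ℝ :=
  letI : DecidableEq V := Classical.decEq V
  letI : DecidableRel G.Adj := fun a b => Classical.dec _
  α • Matrix.diagonal (fun v => (G.degree v : ℝ)) + (1 - α) • G.adjMatrix ℝ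

/-- The `H`-join of the family of graphs `G i`. -/
def HJoin {ι : Type*} (H : SimpleGraph ι) {V : ι → Type*} (G : ∀ i, SimpleGraph (V i)) :
    SimpleGraph (Σ i, V i) where
  Adj x y := H.Adj x.1 y.1 ∨ ∃ (i : ι) (a b : V i), x = ⟨i, a⟩ ∧ y = ⟨i, b⟩ ∧ (G i).Adj a b
  symm := by
    constructor
    rintro ⟨i, a⟩ ⟨j, b⟩ (h | ⟨k, u, v, h1, h2, h3⟩)
    · exact Or.inl h.symm
    · exact Or.inr ⟨k, v, u, h2, h1, h3.symm⟩
  loopless := by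
    constructor
    rintro ⟨i, a⟩ (h | ⟨k, u, v, h1, h2, h3⟩)
    · exact H.loopless.irrefl _ h
    · rw [h1] at h2
      have huv : u = v := by simpa using h2
      subst huv
      exact (G k).loopless.irrefl _ h3

/-- Extending an eigenvector of `A(G_{j0})`, for an eigenvalue `λ` with eigenvector
orthogonal to the all-ones vector, by zeros on the other blocks of the `H`-join gives an
eigenvector of `A_α(G)` with eigenvalue `α s_{j0} + α r_{j0} + (1-α) λ`. -/
theorem stmt15 (k : ℕ) (H : SimpleGraph (Fin k)) [DecidableRel H.Adj]
    (nn : Fin k → ℕ) (rr : Fin k → ℕ)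
    (G : ∀ j : Fin k, SimpleGraph (Fin (nn j))) [∀ j, DecidableRel (G j).Adj]
    (hreg : ∀ j, (G j).IsRegularOfDegree (rr j)) (α : ℝ)
    (j0 : Fin k) (lam : ℝ) (w : Fin (nn j0) → ℝ) (hw : w ≠ 0)
    (heig : (G j0).adjMatrix ℝ *ᵥ w = lam • w) (horth : ∑ a, w a = 0) :
    let W : (Σ j, Fin (nn j)) → ℝ := fun x =>
      if h : x.1 = j0 then w (cast (congrArg (fun t => Fin (nn t)) h) x.2) else 0
    W ≠ 0 ∧
      Aalpha (HJoin H G) α *ᵥ W =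
        (α * (∑ l ∈ H.neighborFinset j0, (nn l : ℝ)) + α * (rr j0 : ℝ) +
            (1 - α) * lam) • W := by
  intro W
  classical
  have hWj0 : ∀ a : Fin (nn j0), W ⟨j0, a⟩ = w a := fun a => dif_pos rfl
  have hWne : ∀ (j : Fin k) (a : Fin (nn j)), j ≠ j0 → W ⟨j, a⟩ = 0 := by
    intro j a hj; exact dif_neg hj
  have hadj1 : ∀ a b : Fin (nn j0), (HJoin H G).Adj ⟨j0, a⟩ ⟨j0, b⟩ ↔ (G j0).Adj a b := by
    intro a b
    constructor
    · rintro (h | ⟨i, u, v, h1, h2, h3⟩)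
      · exact absurd h (H.loopless.irrefl j0)
      · cases h1
        have : b = v := by simpa using h2
        exact this ▸ h3
    · intro h; exact Or.inr ⟨j0, a, b, rfl, rfl, h⟩
  have hadj2 : ∀ (i : Fin k), i ≠ j0 → ∀ (b : Fin (nn i)) (a : Fin (nn j0)),
      (HJoin H G).Adj ⟨i, b⟩ ⟨j0, a⟩ ↔ H.Adj i j0 := by
    intro i hi b a
    constructor
    · rintro (h | ⟨i', u, v, h1, h2, h3⟩)
      · exact h
      · cases h1; cases h2; exact absurd rfl hi
    · exact Or.inl
  -- block sum of adjacency matrix row times W, reduced to j0 block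
  have hrow : ∀ (i : Fin k) (b : Fin (nn i)) (f : (Σ j, Fin (nn j)) → ℝ),
      ∑ x : Σ j, Fin (nn j), f x * W x = ∑ a : Fin (nn j0), f ⟨j0, a⟩ * w a := by
    intro i b f
    rw [← Finset.univ_sigma_univ, Finset.sum_sigma]
    rw [Finset.sum_eq_single_of_mem j0 (mem_univ _)]
    · exact Finset.sum_congr rfl fun a _ => by rw [hWj0]
    · intro j _ hj
      exact Finset.sum_eq_zero fun a _ => by rw [hWne j a hj, mul_zero]
  -- degree computation
  have hdeg : ∀ b : Fin (nn j0),
      ((HJoin H G).degree ⟨j0, b⟩ : ℝ) =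
        (∑ l ∈ H.neighborFinset j0, (nn l : ℝ)) + (rr j0 : ℝ) := by
    intro b
    have h1 : (HJoin H G).degree ⟨j0, b⟩ =
        ∑ x : Σ j, Fin (nn j), if (HJoin H G).Adj ⟨j0, b⟩ x then 1 else 0 := by
      rw [SimpleGraph.degree, SimpleGraph.neighborFinset_eq_filter, Finset.card_filter]
    rw [h1]
    push_cast [apply_ite (Nat.cast : ℕ → ℝ)]
    rw [← Finset.univ_sigma_univ, Finset.sum_sigma]
    rw [← Finset.add_sum_erase _ _ (mem_univ j0)]
    have h2 : ∑ a : Fin (nn j0), (if (HJoin H G).Adj ⟨j0, b⟩ ⟨j0, a⟩ then (1:ℝ) else 0)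
        = (rr j0 : ℝ) := by
      have : ∀ a : Fin (nn j0),
          (if (HJoin H G).Adj ⟨j0, b⟩ ⟨j0, a⟩ then (1:ℝ) else 0) =
          (if (G j0).Adj b a then (1:ℝ) else 0) :=
        fun a => if_congr (hadj1 b a) rfl rfl
      rw [Finset.sum_congr rfl fun a _ => this a]
      have := hreg j0 b
      rw [SimpleGraph.degree, SimpleGraph.neighborFinset_eq_filter, Finset.card_filter] at this
      rw [← this]
      push_cast [apply_ite (Nat.cast : ℕ → ℝ)]
      rfl
    have h3 : ∀ j ∈ Finset.univ.erase j0,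
        ∑ a : Fin (nn j), (if (HJoin H G).Adj ⟨j0, b⟩ ⟨j, a⟩ then (1:ℝ) else 0) =
          if H.Adj j0 j then (nn j : ℝ) else 0 := by
      intro j hj
      have hj' : j ≠ j0 := Finset.ne_of_mem_erase hj
      have e : ∀ a : Fin (nn j),
          (if (HJoin H G).Adj ⟨j0, b⟩ ⟨j, a⟩ then (1:ℝ) else 0) =
            if H.Adj j0 j then (1:ℝ) else 0 := fun a =>
        if_congr (by rw [SimpleGraph.adj_comm, hadj2 j hj' a b, H.adj_comm]) rfl rfl
      rw [Finset.sum_congr rfl fun a _ => e a, Finset.sum_const, Finset.card_univ,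
        Fintype.card_fin]
      split <;> simp
    rw [h2, Finset.sum_congr rfl h3]
    have h4 : ∑ x ∈ Finset.univ.erase j0, (if H.Adj j0 x then (nn x : ℝ) else 0) =
        ∑ l ∈ H.neighborFinset j0, (nn l : ℝ) := by
      rw [Finset.sum_erase Finset.univ (by simp), SimpleGraph.neighborFinset_eq_filter,
        Finset.sum_filter]
    rw [h4]; ring
  -- main computation
  refine ⟨?_, ?_⟩
  · intro h0
    apply hw
    funext a
    have := congrFun h0 ⟨j0, a⟩
    rw [hWj0] at this
    simpa using this
  refine funext fun x => ?_
  obtain ⟨i, b⟩ := x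
  simp only [Aalpha, add_mulVec, smul_mulVec, Pi.add_apply, Pi.smul_apply,
    smul_eq_mul, mulVec_diagonal]
  rw [show ((HJoin H G).adjMatrix ℝ *ᵥ W) ⟨i, b⟩ =
      ∑ x : Σ j, Fin (nn j), (if (HJoin H G).Adj ⟨i, b⟩ x then (1:ℝ) else 0) * W x by
    simp [mulVec, dotProduct, SimpleGraph.adjMatrix_apply]]
  rw [hrow i b]
  by_cases hi : i = j0
  · subst hi
    have hsum : ∑ a : Fin (nn i),
        (if (HJoin H G).Adj ⟨i, b⟩ ⟨i, a⟩ then (1:ℝ) else 0) * w a = lam * w b := by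
      have e : ∀ a : Fin (nn i),
          (if (HJoin H G).Adj ⟨i, b⟩ ⟨i, a⟩ then (1:ℝ) else 0) * w a =
            (G i).adjMatrix ℝ b a * w a := fun a => by
        rw [SimpleGraph.adjMatrix_apply]
        exact congrArg (· * w a) (if_congr (hadj1 b a) rfl rfl)
      rw [Finset.sum_congr rfl fun a _ => e a]
      have := congrFun heig b
      simpa [mulVec, dotProduct] using this
    rw [hWj0, hdeg, hsum]
    ring
  · have hsum0 : ∑ a : Fin (nn j0),
        (if (HJoin H G).Adj ⟨i, b⟩ ⟨j0, a⟩ then (1:ℝ) else 0) * w a = 0 := by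
      have e : ∀ a : Fin (nn j0),
          (if (HJoin H G).Adj ⟨i, b⟩ ⟨j0, a⟩ then (1:ℝ) else 0) * w a =
            (if H.Adj i j0 then (1:ℝ) else 0) * w a := fun a =>
        congrArg (· * w a) (if_congr (hadj2 i hi b a) rfl rfl)
      rw [Finset.sum_congr rfl fun a _ => e a, ← Finset.mul_sum, horth, mul_zero]
    rw [hWne i b hi, hsum0]
    ring
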